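/- For all L, M ∈ 𝐋 the following are equivalent: (i) for every t = 1,…,T, the matrix (MᵀL)_{t,t} is positive semidefinite and rk((LᵀL)_{t,t}) = rk((MᵀL)_{t,t}); (ii) 𝐎*(L,M) = 𝐎*(L,L). -/

import Mathlib

open Matrix Filter Topology

/-- Square matrices of size `dT × dT`, indexed by blocks: index `(t, i)` is
row/column `i` within block `t`. -/
abbrev Mat (d T : ℕ) := Matrix (Fin T × Fin d) (Fin T × Fin d) ℝ

/-- The `t`-th diagonal `d × d` block of a `dT × dT` matrix. -/
def blk {d T : ℕ} (A : Mat d T) (t : Fin T) : Matrix (Fin d) (Fin d) ℝ :=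
  fun i j => A (t, i) (t, j)

/-- The `t`-th block column of a `dT × dT` matrix, a `dT × d` matrix. -/
def colBlk {d T : ℕ} (A : Mat d T) (t : Fin T) : Matrix (Fin T × Fin d) (Fin d) ℝ :=
  fun p j => A p (t, j)

/-- Membership in `𝐋`: block lower triangular matrices. -/
def memL {d T : ℕ} (A : Mat d T) : Prop :=
  ∀ (t s : Fin T) (i j : Fin d), t < s → A (t, i) (s, j) = 0

/-- Membership in `𝐎`: block diagonal matrices with orthogonal `d × d` diagonal blocks
(equivalently: block diagonal and orthogonal). -/
def memO {d T : ℕ} (O : Mat d T) : Prop :=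
  (∀ (t s : Fin T) (i j : Fin d), t ≠ s → O (t, i) (s, j) = 0) ∧ Oᵀ * O = 1

/-- The Frobenius norm of a real matrix. -/
noncomputable def frobNorm {m n : Type*} [Fintype m] [Fintype n] (A : Matrix m n ℝ) : ℝ :=
  Real.sqrt (∑ i, ∑ j, (A i j) ^ 2)

/-- The Frobenius inner product of two real matrices. -/
noncomputable def frobInner {m n : Type*} [Fintype m] [Fintype n] (A B : Matrix m n ℝ) : ℝ :=
  ∑ i, ∑ j, A i j * B i j

/-- The adapted Bures–Wasserstein distance `d_ABW(L, M) = inf_{O ∈ 𝐎} ‖L - M O‖_F`. -/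
noncomputable def dABW {d T : ℕ} (L M : Mat d T) : ℝ :=
  sInf {r : ℝ | ∃ O : Mat d T, memO O ∧ r = frobNorm (L - M * O)}

/-- The set `𝐎*(L, M)` of optimizers of `inf_{O ∈ 𝐎} ‖L - M O‖_F`. -/
noncomputable def OStar {d T : ℕ} (L M : Mat d T) : Set (Mat d T) :=
  {O | memO O ∧ frobNorm (L - M * O) = dABW L M}

/-- The set `𝐕(L) = {M P - L : M ∈ 𝐋, P ∈ 𝐎*(L, M)}`. -/
noncomputable def VSet {d T : ℕ} (L : Mat d T) : Set (Mat d T) :=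
  {V | ∃ M P : Mat d T, memL M ∧ P ∈ OStar L M ∧ V = M * P - L}

/-- The set `𝒱(L) = {V ∈ 𝐋 : (Vᵀ L)_{t,t} is symmetric for all t}`. -/
def calV {d T : ℕ} (L : Mat d T) : Set (Mat d T) :=
  {V | memL V ∧ ∀ t : Fin T, (blk (Vᵀ * L) t).IsSymm}

/-- The set `𝐋^reg = {L ∈ 𝐋 : (Lᵀ L)_{t,t} is positive definite for all t}`. -/
def LReg {d T : ℕ} : Set (Mat d T) :=
  {L | memL L ∧ ∀ t : Fin T, (blk (Lᵀ * L) t).PosDef}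

/-- The sum of the singular values of a real square matrix `A`,
i.e. the trace of the positive semidefinite square root of `Aᵀ A`. -/
noncomputable def svSum {n : ℕ} (A : Matrix (Fin n) (Fin n) ℝ) : ℝ :=
  ((Matrix.posSemidef_conjTranspose_mul_self A).1.eigenvectorUnitary.1 *
    diagonal ((RCLike.ofReal : ℝ → ℝ) ∘ ((Matrix.posSemidef_conjTranspose_mul_self A).1.eigenvalues · |>.sqrt)) *
    (star (Matrix.posSemidef_conjTranspose_mul_self A).1.eigenvectorUnitary :
      Matrix (Fin n) (Fin n) ℝ)).trace

/-- The operator norm of a real matrix: the supremum of the euclidean norm `‖A x‖₂`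
over the euclidean unit ball. -/
noncomputable def opNorm {m n : Type*} [Fintype m] [Fintype n] (A : Matrix m n ℝ) : ℝ :=
  sSup {r : ℝ | ∃ x : n → ℝ, (∑ j, (x j) ^ 2) ≤ 1 ∧ r = Real.sqrt (∑ i, (A.mulVec x i) ^ 2)}


section basics
variable {m n : Type*} [Fintype m] [Fintype n]

lemma frobInner_comm (A B : Matrix m n ℝ) : frobInner A B = frobInner B A := by
  simp [frobInner, mul_comm]

lemma frobInner_sub_left (A B C : Matrix m n ℝ) :
    frobInner (A - B) C = frobInner A C - frobInner B C := by
  simp [frobInner, sub_mul, Finset.sum_sub_distrib]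

lemma frobInner_sub_right (A B C : Matrix m n ℝ) :
    frobInner A (B - C) = frobInner A B - frobInner A C := by
  simp [frobInner, mul_sub, Finset.sum_sub_distrib]

lemma frobInner_self_nonneg (A : Matrix m n ℝ) : 0 ≤ frobInner A A := by
  apply Finset.sum_nonneg; intro i _; apply Finset.sum_nonneg; intro j _; exact mul_self_nonneg _

lemma frobInner_self_eq_zero {A : Matrix m n ℝ} (h : frobInner A A = 0) : A = 0 := by
  ext i j
  have h1 : ∀ i ∈ Finset.univ, (0:ℝ) ≤ ∑ j, A i j * A i j := by
    intro i _; exact Finset.sum_nonneg fun j _ => mul_self_nonneg _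
  have h2 := (Finset.sum_eq_zero_iff_of_nonneg h1).mp h i (Finset.mem_univ i)
  have h3 := (Finset.sum_eq_zero_iff_of_nonneg (fun j _ => mul_self_nonneg (A i j))).mp h2 j
    (Finset.mem_univ j)
  simpa [mul_self_eq_zero] using h3

lemma frobInner_le (A B : Matrix m n ℝ) :
    (frobInner A B)^2 ≤ frobInner A A * frobInner B B := by
  have h : ∀ C D : Matrix m n ℝ, frobInner C D = ∑ p : m × n, C p.1 p.2 * D p.1 p.2 := by
    intro C D; rw [frobInner]
    exact (Fintype.sum_prod_type (f := fun p : m × n => C p.1 p.2 * D p.1 p.2)).symm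
  rw [h, h, h]
  have := Finset.sum_mul_sq_le_sq_mul_sq Finset.univ
    (fun p : m × n => A p.1 p.2) (fun p : m × n => B p.1 p.2)
  simpa [pow_two] using this

end basics

section square
open scoped MatrixOrder
variable {n : Type*} [Fintype n] [DecidableEq n]

lemma trace_eq_frobInner (X Y : Matrix n n ℝ) : (X * Y).trace = frobInner Xᵀ Y := by
  simp only [Matrix.trace, Matrix.diag, Matrix.mul_apply, frobInner, Matrix.transpose_apply]
  rw [Finset.sum_comm]

lemma frobInner_eq_trace (A B : Matrix n n ℝ) : frobInner A B = (Aᵀ * B).trace := by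
  rw [trace_eq_frobInner, Matrix.transpose_transpose]

lemma real_conjTranspose_eq_transpose (A : Matrix n n ℝ) : Aᴴ = Aᵀ := by
  ext i j; simp [Matrix.conjTranspose_apply]

/-- orthogonality: `QᵀQ = 1` implies `QQᵀ = 1`. -/
lemma orth_comm {Q : Matrix n n ℝ} (h : Qᵀ * Q = 1) : Q * Qᵀ = 1 :=
  mul_eq_one_comm.mp h

/-- Trace inequality: for `P` PSD and `G` orthogonal, `tr(G P) ≤ tr P`. -/
lemma trace_orth_mul_psd_le {P G : Matrix n n ℝ} (hP : P.PosSemidef) (hG : Gᵀ * G = 1) :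
    (G * P).trace ≤ P.trace := by
  set S := CFC.sqrt P with hSdef
  have hSS : S * S = P := CFC.sqrt_mul_sqrt_self P hP.nonneg
  have hSsym : Sᵀ = S := by
    rw [← real_conjTranspose_eq_transpose]; exact (CFC.sqrt_nonneg P).posSemidef.1
  have h1 : (G * P).trace = frobInner S (G * S) := by
    rw [← hSS, ← Matrix.mul_assoc, trace_mul_comm, trace_eq_frobInner, hSsym]
  have h2 : frobInner (G * S) (G * S) = frobInner S S := by
    rw [frobInner_eq_trace, Matrix.transpose_mul, Matrix.mul_assoc, ← Matrix.mul_assoc Gᵀ G S,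
      hG, Matrix.one_mul, ← frobInner_eq_trace]
  have h3 : (frobInner S (G * S))^2 ≤ frobInner S S * frobInner S S := by
    have := frobInner_le S (G * S); rwa [h2] at this
  have h4 : frobInner S S = P.trace := by
    rw [frobInner_eq_trace, hSsym, hSS]
  have h5 : 0 ≤ frobInner S S := frobInner_self_nonneg S
  rw [h1, ← h4]
  nlinarith [h3, h5]

end square

section square2
variable {n : Type*} [Fintype n] [DecidableEq n]

lemma transpose_stdBasisMatrix' (i j : n) (c : ℝ) :
    (Matrix.single i j c)ᵀ = Matrix.single j i c := by
  ext a b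
  simp only [Matrix.transpose_apply, Matrix.single, Matrix.of_apply]
  by_cases h1 : i = b <;> by_cases h2 : j = a <;> simp [h1, h2]

lemma trace_stdBasisMatrix_mul (i j : n) (N : Matrix n n ℝ) :
    (Matrix.single i j (1:ℝ) * N).trace = N j i := by
  rw [Matrix.trace]
  rw [Finset.sum_eq_single i]
  · simp [Matrix.diag]
  · intro k _ hk
    simp [Matrix.diag, hk]
  · intro h; exact absurd (Finset.mem_univ i) h

lemma trace_vecMulVec_mul (v : n → ℝ) (N : Matrix n n ℝ) :
    (vecMulVec v v * N).trace = v ⬝ᵥ N.mulVec v := by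
  simp only [Matrix.trace, Matrix.diag, Matrix.mul_apply, Matrix.vecMulVec_apply,
    dotProduct, Matrix.mulVec]
  rw [Finset.sum_comm]
  apply Finset.sum_congr rfl
  intro k _
  rw [Finset.mul_sum]
  apply Finset.sum_congr rfl
  intro i _
  ring

lemma vecMulVec_transpose (v : n → ℝ) : (vecMulVec v v)ᵀ = vecMulVec v v := by
  ext a b; simp [Matrix.vecMulVec_apply, mul_comm]

lemma vecMulVec_mul_self (v : n → ℝ) :
    vecMulVec v v * vecMulVec v v = (v ⬝ᵥ v) • vecMulVec v v := by
  ext a b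
  simp only [Matrix.mul_apply, Matrix.vecMulVec_apply, Matrix.smul_apply, smul_eq_mul,
    dotProduct]
  rw [Finset.sum_mul]
  apply Finset.sum_congr rfl
  intro k _
  ring

/-- If `tr(G N) ≤ tr N` for every orthogonal `G`, then `N` is PSD. -/
lemma psd_of_trace_le {N : Matrix n n ℝ}
    (h : ∀ G : Matrix n n ℝ, Gᵀ * G = 1 → (G * N).trace ≤ N.trace) :
    N.PosSemidef := by
  -- symmetry
  have hsym : ∀ i j : n, N j i = N i j := by
    intro i j
    rcases eq_or_ne i j with rfl | hij
    · rfl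
    have key : ∀ t : ℝ, t * (N i j - N j i) ≤ t^2 * (N i i + N j j) := by
      intro t
      set c : ℝ := (1 - t^2)/(1 + t^2) with hc
      set s : ℝ := (2*t)/(1 + t^2) with hs
      have ht2 : (0:ℝ) < 1 + t^2 := by positivity
      have hcs : c^2 + s^2 = 1 := by
        rw [hc, hs]; field_simp; ring
      set U : Matrix n n ℝ := Matrix.single i i 1 + Matrix.single j j 1 with hU
      set J : Matrix n n ℝ := Matrix.single j i 1 - Matrix.single i j 1 with hJ
      have hUU : U * U = U := by
        rw [hU]
        simp [Matrix.add_mul, Matrix.mul_add, hij, hij.symm]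
      have hUJ : U * J = J := by
        rw [hU, hJ]
        simp [Matrix.add_mul, Matrix.mul_sub, Matrix.mul_add, Matrix.sub_mul, hij, hij.symm]
      have hJU : J * U = J := by
        rw [hU, hJ]
        simp [Matrix.add_mul, Matrix.mul_sub, Matrix.mul_add, Matrix.sub_mul, hij, hij.symm,
          sub_eq_add_neg]
      have hJJ : J * J = -U := by
        rw [hU, hJ]
        simp [Matrix.sub_mul, Matrix.mul_sub, hij, hij.symm]
        abel
      set G : Matrix n n ℝ := 1 + (c-1) • U + s • J with hG
      have hGT : Gᵀ = 1 + (c-1) • U - s • J := by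
        rw [hG]
        have h1 : Uᵀ = U := by
          rw [hU]; simp [Matrix.transpose_add, transpose_stdBasisMatrix']
        have h2 : Jᵀ = -J := by
          rw [hJ]; simp [Matrix.transpose_sub, transpose_stdBasisMatrix', sub_eq_add_neg]
          try abel
        simp only [Matrix.transpose_add, Matrix.transpose_smul, Matrix.transpose_one, h1, h2,
          smul_neg]
        abel
      have hval : (c-1) * (c-1) + ((c-1) + (c-1)) + s * s = 0 := by nlinarith [hcs]
      have horth : Gᵀ * G = 1 := by
        rw [hGT, hG]
        have expand : (1 + (c-1) • U - s • J) * (1 + (c-1) • U + s • J) =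
            1 + ((c-1) * (c-1) + ((c-1) + (c-1)) + s * s) • U := by
          simp only [Matrix.add_mul, Matrix.sub_mul, Matrix.mul_add, Matrix.mul_sub,
            Matrix.smul_mul, Matrix.mul_smul, Matrix.one_mul, Matrix.mul_one,
            hUU, hUJ, hJU, hJJ, smul_smul, smul_neg]
          module
        rw [expand, hval]
        simp
      have htr := h G horth
      have hGN : (G * N).trace = N.trace + (c-1) * (N i i + N j j) + s * (N i j - N j i) := by
        rw [hG]
        simp only [Matrix.add_mul, Matrix.smul_mul, Matrix.one_mul, Matrix.trace_add,
          Matrix.trace_smul, hU, hJ, Matrix.sub_mul, Matrix.trace_sub,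
          trace_stdBasisMatrix_mul]
        simp only [smul_eq_mul]
        try ring
      rw [hGN] at htr
      have h0 : (c-1) * (N i i + N j j) + s * (N i j - N j i) ≤ 0 := by linarith
      have e1 : (c - 1) * (1+t^2) = -2*t^2 := by rw [hc]; field_simp; ring
      have e2 : s * (1+t^2) = 2*t := by rw [hs]; field_simp
      have h1 : ((c-1) * (N i i + N j j) + s * (N i j - N j i)) * (1+t^2) ≤ 0 := by
        have := mul_le_mul_of_nonneg_right h0 ht2.le
        simpa using this
      have h2 : ((c-1) * (N i i + N j j) + s * (N i j - N j i)) * (1+t^2)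
          = -2*t^2 * (N i i + N j j) + 2*t * (N i j - N j i) := by
        calc ((c-1) * (N i i + N j j) + s * (N i j - N j i)) * (1+t^2)
            = ((c-1) * (1+t^2)) * (N i i + N j j) + (s * (1+t^2)) * (N i j - N j i) := by ring
          _ = -2*t^2 * (N i i + N j j) + 2*t * (N i j - N j i) := by rw [e1, e2]
      rw [h2] at h1
      linarith
    -- now conclude N i j = N j i
    set b := N i j - N j i with hbdef
    set a := N i i + N j j with hadef
    have hbz : b = 0 := by
      by_contra hb
      have hapos : (0:ℝ) < |a| + 1 := by positivity
      have hk := key (b / (|a| + 1))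
      have hb2 : 0 < b^2 := by positivity
      have hba : a ≤ |a| := le_abs_self a
      rw [div_pow, div_mul_eq_mul_div, div_mul_eq_mul_div,
        div_le_div_iff₀ hapos (by positivity)] at hk
      -- hk : b * b * (|a|+1)^2 ≤ b^2 * a * (|a|+1)
      nlinarith [hk, hba, mul_pos hb2 hapos, hapos]
    linarith [hbz]
  -- PSD
  rw [Matrix.posSemidef_iff_dotProduct_mulVec]
  constructor
  · rw [Matrix.IsHermitian, real_conjTranspose_eq_transpose]
    ext i j
    rw [Matrix.transpose_apply]
    exact hsym i j
  · intro x
    rw [star_trivial]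
    by_cases hx : x = 0
    · simp [hx]
    · have hc0 : 0 < x ⬝ᵥ x := by
        have h1 : 0 ≤ x ⬝ᵥ x := Finset.sum_nonneg fun k _ => mul_self_nonneg _
        rcases h1.lt_or_eq with h | h
        · exact h
        · exfalso
          apply hx
          ext k
          have := (Finset.sum_eq_zero_iff_of_nonneg
            (fun k (_ : k ∈ Finset.univ) => mul_self_nonneg (x k))).mp h.symm k
            (Finset.mem_univ k)
          simpa [mul_self_eq_zero] using this
      set r : ℝ := (Real.sqrt (x ⬝ᵥ x))⁻¹ with hr
      have hrs : Real.sqrt (x ⬝ᵥ x) > 0 := Real.sqrt_pos.mpr hc0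
      have hr2 : r^2 * (x ⬝ᵥ x) = 1 := by
        have hrr : r^2 = (x ⬝ᵥ x)⁻¹ := by rw [hr, inv_pow, Real.sq_sqrt hc0.le]
        rw [hrr, inv_mul_cancel₀ hc0.ne']
      set v : n → ℝ := r • x with hv
      have hvv : v ⬝ᵥ v = 1 := by
        rw [hv, smul_dotProduct, dotProduct_smul, smul_eq_mul, smul_eq_mul,
          ← mul_assoc, ← pow_two]
        exact hr2
      set P : Matrix n n ℝ := vecMulVec v v with hP
      set G : Matrix n n ℝ := 1 - (2:ℝ) • P with hGdef
      have horth : Gᵀ * G = 1 := by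
        rw [hGdef]
        have hPT : (1 - (2:ℝ) • P)ᵀ = 1 - (2:ℝ) • P := by
          rw [Matrix.transpose_sub, Matrix.transpose_smul, Matrix.transpose_one, hP,
            vecMulVec_transpose]
        rw [hPT]
        have expand : (1 - (2:ℝ) • P) * (1 - (2:ℝ) • P) = 1 - (4:ℝ) • P + (4:ℝ) • (P * P) := by
          simp only [Matrix.sub_mul, Matrix.mul_sub, Matrix.smul_mul, Matrix.mul_smul,
            Matrix.one_mul, Matrix.mul_one, smul_smul]
          module
        rw [expand, hP, vecMulVec_mul_self, hvv]
        simp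
      have htr := h G horth
      have hGN : (G * N).trace = N.trace - 2 * (v ⬝ᵥ N.mulVec v) := by
        rw [hGdef]
        rw [Matrix.sub_mul, Matrix.smul_mul, Matrix.one_mul, Matrix.trace_sub,
          Matrix.trace_smul, hP, trace_vecMulVec_mul]
        simp
      rw [hGN] at htr
      have hpos : 0 ≤ v ⬝ᵥ N.mulVec v := by linarith
      rw [hv, smul_dotProduct, Matrix.mulVec_smul, dotProduct_smul,
        smul_eq_mul, smul_eq_mul, ← mul_assoc, ← pow_two] at hpos
      have hr2pos : 0 < r^2 := by
        rw [hr]; positivity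
      nlinarith [hpos, hr2pos]
end square2

section square3
open scoped MatrixOrder
variable {n : Type*} [Fintype n] [DecidableEq n]

/-- Equality case: if `P` is PSD, `Q` orthogonal and `QᵀP` is PSD then `QP = P`. -/
lemma orth_mul_psd_eq {P Q : Matrix n n ℝ} (hP : P.PosSemidef) (hQ : Qᵀ * Q = 1)
    (hQP : (Qᵀ * P).PosSemidef) : Q * P = P := by
  have hQT : (Qᵀ)ᵀ * Qᵀ = 1 := by rw [Matrix.transpose_transpose]; exact orth_comm hQ
  have h1 : (Qᵀ * P).trace ≤ P.trace := trace_orth_mul_psd_le hP hQT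
  have h2 : (Q * (Qᵀ * P)).trace ≤ (Qᵀ * P).trace := trace_orth_mul_psd_le hQP hQ
  have h3 : Q * (Qᵀ * P) = P := by
    rw [← Matrix.mul_assoc, orth_comm hQ, Matrix.one_mul]
  rw [h3] at h2
  have heq : (Qᵀ * P).trace = P.trace := le_antisymm h1 h2
  set S := CFC.sqrt P with hSdef
  have hSS : S * S = P := CFC.sqrt_mul_sqrt_self P hP.nonneg
  have hSsym : Sᵀ = S := by
    rw [← real_conjTranspose_eq_transpose]; exact (CFC.sqrt_nonneg P).posSemidef.1
  have e1 : (Qᵀ * P).trace = frobInner S (Qᵀ * S) := by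
    rw [← hSS, ← Matrix.mul_assoc, trace_mul_comm, trace_eq_frobInner, hSsym]
  have e2 : frobInner (Qᵀ * S) (Qᵀ * S) = frobInner S S := by
    calc frobInner (Qᵀ * S) (Qᵀ * S) = ((Qᵀ * S)ᵀ * (Qᵀ * S)).trace := frobInner_eq_trace _ _
      _ = (Sᵀ * (Q * (Qᵀ * S))).trace := by
          rw [Matrix.transpose_mul, Matrix.transpose_transpose, Matrix.mul_assoc]
      _ = (Sᵀ * S).trace := by rw [← Matrix.mul_assoc Q, orth_comm hQ, Matrix.one_mul]
      _ = frobInner S S := (frobInner_eq_trace _ _).symm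
  have e3 : frobInner S S = P.trace := by rw [frobInner_eq_trace, hSsym, hSS]
  have e4 : frobInner S (Qᵀ * S) = frobInner S S := by rw [← e1, heq, ← e3]
  have hzero : frobInner (S - Qᵀ * S) (S - Qᵀ * S) = 0 := by
    rw [frobInner_sub_left, frobInner_sub_right, frobInner_sub_right,
      frobInner_comm (Qᵀ * S) S]
    rw [e2, e4]
    ring
  have h5 : S - Qᵀ * S = 0 := frobInner_self_eq_zero hzero
  have h6 : Qᵀ * S = S := by
    have := sub_eq_zero.mp h5; exact this.symm
  calc Q * P = Q * ((Qᵀ * S) * S) := by rw [h6, hSS]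
    _ = (Q * Qᵀ) * (S * S) := by
        rw [Matrix.mul_assoc Qᵀ S S, ← Matrix.mul_assoc Q Qᵀ (S * S)]
    _ = P := by rw [orth_comm hQ, Matrix.one_mul, hSS]

/-- Characterization of maximizers of `R ↦ tr(Rᵀ A)` over the orthogonal group. -/
lemma maximizer_iff {A Q : Matrix n n ℝ} (hQ : Qᵀ * Q = 1) :
    (∀ R : Matrix n n ℝ, Rᵀ * R = 1 → (Rᵀ * A).trace ≤ (Qᵀ * A).trace) ↔
      (Qᵀ * A).PosSemidef := by
  constructor
  · intro hmax
    apply psd_of_trace_le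
    intro G hG
    have hR : (Q * Gᵀ)ᵀ * (Q * Gᵀ) = 1 := by
      rw [Matrix.transpose_mul, Matrix.transpose_transpose, Matrix.mul_assoc,
        ← Matrix.mul_assoc Qᵀ Q Gᵀ, hQ, Matrix.one_mul, orth_comm hG]
    have h := hmax (Q * Gᵀ) hR
    rwa [Matrix.transpose_mul, Matrix.transpose_transpose, Matrix.mul_assoc] at h
  · intro hpsd R hR
    have hG : (Rᵀ * Q)ᵀ * (Rᵀ * Q) = 1 := by
      rw [Matrix.transpose_mul, Matrix.transpose_transpose, Matrix.mul_assoc,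
        ← Matrix.mul_assoc R Rᵀ Q, orth_comm hR, Matrix.one_mul, hQ]
    have h1 : (Rᵀ * Q) * (Qᵀ * A) = Rᵀ * A := by
      rw [Matrix.mul_assoc, ← Matrix.mul_assoc Q Qᵀ A, orth_comm hQ, Matrix.one_mul]
    have h := trace_orth_mul_psd_le hpsd hG
    rwa [h1] at h
end square3

section blocks
variable {d T : ℕ}

/-- `Md` abbreviation. -/
local notation "Md" => Matrix (Fin d) (Fin d) ℝ

lemma real_conjTranspose_eq_transpose' {m n : Type*} (A : Matrix m n ℝ) : Aᴴ = Aᵀ := by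
  ext i j; simp [Matrix.conjTranspose_apply]

lemma blk_transpose_mul (X Y : Mat d T) (t : Fin T) :
    blk (Xᵀ * Y) t = (colBlk X t)ᵀ * colBlk Y t := by
  ext i j
  simp [blk, colBlk, Matrix.mul_apply, Matrix.transpose_apply]

lemma blk_psd (L : Mat d T) (t : Fin T) : (blk (Lᵀ * L) t).PosSemidef := by
  rw [blk_transpose_mul, ← real_conjTranspose_eq_transpose']
  exact Matrix.posSemidef_conjTranspose_mul_self (colBlk L t)

lemma blk_one (t : Fin T) : blk (1 : Mat d T) t = 1 := by
  ext i j
  by_cases h : i = j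
  · simp [blk, h, Matrix.one_apply]
  · have : ((t, i) : Fin T × Fin d) ≠ (t, j) := by
      simp [Prod.ext_iff, h]
    simp [blk, Matrix.one_apply, this, h]

lemma transpose_mul_blk_diag {O : Mat d T}
    (hod : ∀ (t s : Fin T) (i j : Fin d), t ≠ s → O (t, i) (s, j) = 0)
    (t : Fin T) (i j : Fin d) :
    (Oᵀ * O) (t, i) (t, j) = ((blk O t)ᵀ * blk O t) i j := by
  rw [Matrix.mul_apply]
  rw [Fintype.sum_prod_type]
  rw [Finset.sum_eq_single t]
  · simp [blk, Matrix.mul_apply, Matrix.transpose_apply]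
  · intro r _ hr
    apply Finset.sum_eq_zero
    intro k _
    rw [Matrix.transpose_apply, hod r t k i hr, zero_mul]
  · simp

lemma transpose_mul_blk_off {O : Mat d T}
    (hod : ∀ (t s : Fin T) (i j : Fin d), t ≠ s → O (t, i) (s, j) = 0)
    {t s : Fin T} (hts : t ≠ s) (i j : Fin d) :
    (Oᵀ * O) (t, i) (s, j) = 0 := by
  rw [Matrix.mul_apply]
  apply Finset.sum_eq_zero
  rintro ⟨r, k⟩ _
  rw [Matrix.transpose_apply]
  rcases eq_or_ne r t with h | hr
  · rw [h, hod t s k j hts, mul_zero]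
  · rw [hod r t k i hr, zero_mul]

lemma memO_iff (O : Mat d T) :
    memO O ↔ (∀ (t s : Fin T) (i j : Fin d), t ≠ s → O (t, i) (s, j) = 0) ∧
      ∀ t, (blk O t)ᵀ * blk O t = 1 := by
  constructor
  · rintro ⟨hod, h1⟩
    refine ⟨hod, fun t => ?_⟩
    ext i j
    have h2 : (Oᵀ * O) (t, i) (t, j) = (1 : Mat d T) (t, i) (t, j) := by rw [h1]
    rw [transpose_mul_blk_diag hod] at h2
    rw [h2]
    by_cases h : i = j
    · simp [h, Matrix.one_apply]
    · have : ((t, i) : Fin T × Fin d) ≠ (t, j) := by simp [Prod.ext_iff, h]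
      simp [Matrix.one_apply, this, h]
  · rintro ⟨hod, h1⟩
    refine ⟨hod, ?_⟩
    ext ⟨t, i⟩ ⟨s, j⟩
    rcases eq_or_ne t s with rfl | hts
    · rw [transpose_mul_blk_diag hod, h1 t]
      by_cases h : i = j
      · simp [h, Matrix.one_apply]
      · have : ((t, i) : Fin T × Fin d) ≠ (t, j) := by simp [Prod.ext_iff, h]
        simp [Matrix.one_apply, this, h]
    · rw [transpose_mul_blk_off hod hts]
      have : ((t, i) : Fin T × Fin d) ≠ (s, j) := by simp [Prod.ext_iff, hts]
      simp [Matrix.one_apply, this]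

lemma memO_one : memO (1 : Mat d T) := by
  rw [memO_iff]
  constructor
  · intro t s i j hts
    have : ((t, i) : Fin T × Fin d) ≠ (s, j) := by simp [Prod.ext_iff, hts]
    simp [Matrix.one_apply, this]
  · intro t
    rw [blk_one]
    simp

/-- Trace decomposition over diagonal blocks. -/
lemma trace_transpose_mul_blocks {O : Mat d T}
    (hod : ∀ (t s : Fin T) (i j : Fin d), t ≠ s → O (t, i) (s, j) = 0) (C : Mat d T) :
    (Oᵀ * C).trace = ∑ t, frobInner (blk O t) (blk C t) := by
  rw [Matrix.trace]
  have h1 : ∀ p : Fin T × Fin d, (Oᵀ * C).diag p =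
      ∑ k, O (p.1, k) (p.1, p.2) * C (p.1, k) (p.1, p.2) := by
    rintro ⟨t, i⟩
    simp only [Matrix.diag, Matrix.mul_apply, Matrix.transpose_apply]
    rw [Fintype.sum_prod_type]
    rw [Finset.sum_eq_single t]
    · intro r _ hr
      apply Finset.sum_eq_zero
      intro k _
      rw [hod r t k i hr, zero_mul]
    · simp
  rw [Finset.sum_congr rfl (fun p _ => h1 p)]
  rw [Fintype.sum_prod_type]
  apply Finset.sum_congr rfl
  intro t _
  rw [frobInner]
  rw [Finset.sum_comm]
  rfl

end blocks

section blocks2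
variable {d T : ℕ}

lemma frobNorm_eq {m n : Type*} [Fintype m] [Fintype n] (A : Matrix m n ℝ) :
    frobNorm A = Real.sqrt (frobInner A A) := by
  rw [frobNorm, frobInner]
  congr 1
  apply Finset.sum_congr rfl
  intro i _
  apply Finset.sum_congr rfl
  intro j _
  rw [pow_two]

lemma frobInner_expand {L M O : Mat d T} (hO : memO O) :
    frobInner (L - M * O) (L - M * O) =
      frobInner L L + frobInner M M - 2 * frobInner (M * O) L := by
  obtain ⟨-, horth⟩ := hO
  have h1 : frobInner (M * O) (M * O) = frobInner M M := by
    calc frobInner (M * O) (M * O) = ((M * O)ᵀ * (M * O)).trace := frobInner_eq_trace _ _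
      _ = ((M * O) * (M * O)ᵀ).trace := trace_mul_comm _ _
      _ = ((M * (O * Oᵀ)) * Mᵀ).trace := by
          rw [Matrix.transpose_mul, Matrix.mul_assoc M O (Oᵀ * Mᵀ),
            ← Matrix.mul_assoc O Oᵀ Mᵀ, ← Matrix.mul_assoc M (O * Oᵀ) Mᵀ]
      _ = (M * Mᵀ).trace := by rw [orth_comm horth, Matrix.mul_one]
      _ = (Mᵀ * M).trace := trace_mul_comm _ _
      _ = frobInner M M := (frobInner_eq_trace _ _).symm
  rw [frobInner_sub_left, frobInner_sub_right, frobInner_sub_right, h1,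
    frobInner_comm L (M * O)]
  ring

lemma frobNorm_le_iff {L M O O' : Mat d T} (hO : memO O) (hO' : memO O') :
    frobNorm (L - M * O) ≤ frobNorm (L - M * O') ↔
      frobInner (M * O') L ≤ frobInner (M * O) L := by
  rw [frobNorm_eq, frobNorm_eq, Real.sqrt_le_sqrt_iff (frobInner_self_nonneg _),
    frobInner_expand hO, frobInner_expand hO']
  constructor <;> intro h <;> linarith

lemma mem_OStar_iff {L M : Mat d T} (O : Mat d T) :
    O ∈ OStar L M ↔ memO O ∧ ∀ O', memO O' →
      frobNorm (L - M * O) ≤ frobNorm (L - M * O') := by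
  have hbdd : BddBelow {r : ℝ | ∃ P : Mat d T, memO P ∧ r = frobNorm (L - M * P)} := by
    refine ⟨0, ?_⟩
    rintro r ⟨P, hP, rfl⟩
    exact Real.sqrt_nonneg _
  constructor
  · rintro ⟨h1, h2⟩
    refine ⟨h1, fun O' hO' => ?_⟩
    rw [h2]
    exact csInf_le hbdd ⟨O', hO', rfl⟩
  · rintro ⟨h1, h2⟩
    refine ⟨h1, le_antisymm ?_ ?_⟩
    · exact le_csInf ⟨frobNorm (L - M * O), O, h1, rfl⟩ (by rintro r ⟨P, hP, rfl⟩; exact h2 P hP)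
    · exact csInf_le hbdd ⟨O, h1, rfl⟩

/-- Replace the `t`-th diagonal block of `O` by `Q`. -/
def setBlk (O : Mat d T) (t : Fin T) (Q : Matrix (Fin d) (Fin d) ℝ) : Mat d T :=
  fun p q => if p.1 = t ∧ q.1 = t then Q p.2 q.2 else O p q

lemma blk_setBlk_same (O : Mat d T) (t : Fin T) (Q : Matrix (Fin d) (Fin d) ℝ) :
    blk (setBlk O t Q) t = Q := by
  ext i j; simp [blk, setBlk]

lemma blk_setBlk_ne (O : Mat d T) {t s : Fin T} (h : s ≠ t) (Q : Matrix (Fin d) (Fin d) ℝ) :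
    blk (setBlk O t Q) s = blk O s := by
  ext i j; simp [blk, setBlk, h]

lemma memO_setBlk {O : Mat d T} (hO : memO O) {t : Fin T} {Q : Matrix (Fin d) (Fin d) ℝ}
    (hQ : Qᵀ * Q = 1) : memO (setBlk O t Q) := by
  rw [memO_iff] at hO ⊢
  obtain ⟨hod, hblk⟩ := hO
  constructor
  · intro r s i j hrs
    have : ¬(r = t ∧ s = t) := by
      rintro ⟨rfl, rfl⟩; exact hrs rfl
    simp only [setBlk, this, if_false]
    exact hod r s i j hrs
  · intro s
    rcases eq_or_ne s t with rfl | hst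
    · rw [blk_setBlk_same]; exact hQ
    · rw [blk_setBlk_ne O hst]; exact hblk s

/-- Decoupled block characterization of `OStar`. -/
lemma mem_OStar_iff_blocks {L M : Mat d T} (O : Mat d T) :
    O ∈ OStar L M ↔ memO O ∧ ∀ t, ((blk O t)ᵀ * blk (Mᵀ * L) t).PosSemidef := by
  rw [mem_OStar_iff]
  have key : ∀ (P P' : Mat d T), memO P → memO P' →
      (frobNorm (L - M * P) ≤ frobNorm (L - M * P') ↔
        ∑ t, frobInner (blk P' t) (blk (Mᵀ * L) t) ≤
          ∑ t, frobInner (blk P t) (blk (Mᵀ * L) t)) := by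
    intro P P' hP hP'
    rw [frobNorm_le_iff hP hP']
    have e : ∀ (R : Mat d T), memO R → frobInner (M * R) L =
        ∑ t, frobInner (blk R t) (blk (Mᵀ * L) t) := by
      intro R hR
      rw [frobInner_eq_trace, Matrix.transpose_mul, Matrix.mul_assoc,
        trace_transpose_mul_blocks hR.1]
    rw [e P hP, e P' hP']
  constructor
  · rintro ⟨hO, hmax⟩
    refine ⟨hO, fun t => ?_⟩
    obtain ⟨hod, hblk⟩ := (memO_iff O).mp hO
    rw [← maximizer_iff (hblk t)]
    intro R hR
    have hO' : memO (setBlk O t R) := memO_setBlk hO hR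
    have h := (key O (setBlk O t R) hO hO').mp (hmax _ hO')
    rw [← frobInner_eq_trace, ← frobInner_eq_trace]
    have herase : ∀ s ∈ Finset.univ.erase t,
        frobInner (blk (setBlk O t R) s) (blk (Mᵀ * L) s) =
          frobInner (blk O s) (blk (Mᵀ * L) s) := by
      intro s hs
      rw [blk_setBlk_ne O (Finset.ne_of_mem_erase hs)]
    rw [← Finset.sum_erase_add _ _ (Finset.mem_univ t),
      ← Finset.sum_erase_add _ _ (Finset.mem_univ t)] at h
    rw [Finset.sum_congr rfl herase] at h
    rw [blk_setBlk_same] at h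
    exact le_of_add_le_add_left h
  · rintro ⟨hO, hpsd⟩
    refine ⟨hO, fun O' hO' => ?_⟩
    rw [key O O' hO hO']
    apply Finset.sum_le_sum
    intro t _
    obtain ⟨hod, hblk⟩ := (memO_iff O).mp hO
    obtain ⟨hod', hblk'⟩ := (memO_iff O').mp hO'
    have := (maximizer_iff (hblk t)).mpr (hpsd t) (blk O' t) (hblk' t)
    rw [← frobInner_eq_trace, ← frobInner_eq_trace] at this
    exact this

end blocks2

section rank
open Module
variable {d T : ℕ}

lemma range_transpose_mul_self {m n : Type*} [Fintype m] [Fintype n] [DecidableEq n]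
    (X : Matrix m n ℝ) :
    LinearMap.range (Xᵀ * X).mulVecLin = LinearMap.range Xᵀ.mulVecLin := by
  apply Submodule.eq_of_le_of_finrank_le
  · rw [Matrix.mulVecLin_mul]
    exact LinearMap.range_comp_le_range _ _
  · have h1 : (Xᵀ * X).rank = Xᵀ.rank := by
      rw [Matrix.rank_transpose_mul_self, Matrix.rank_transpose]
    exact h1.ge

lemma matrix_eq_of_mulVec {m n : Type*} [Fintype m] [Fintype n] [DecidableEq n]
    {A B : Matrix m n ℝ} (h : ∀ v, A.mulVec v = B.mulVec v) : A = B := by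
  ext i j
  have := congrFun (h (Pi.single j 1)) i
  simpa [Matrix.mulVec_single] using this

lemma fix_of_range_le {n : Type*} [Fintype n] [DecidableEq n]
    {A B Q : Matrix n n ℝ}
    (hle : LinearMap.range A.mulVecLin ≤ LinearMap.range B.mulVecLin)
    (hQB : Q * B = B) : Q * A = A := by
  apply matrix_eq_of_mulVec
  intro v
  have hv : A.mulVec v ∈ LinearMap.range B.mulVecLin := hle ⟨v, rfl⟩
  obtain ⟨w, hw⟩ := hv
  have hw' : B.mulVec w = A.mulVec v := hw
  rw [← Matrix.mulVec_mulVec, ← hw', Matrix.mulVec_mulVec, hQB, hw']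

lemma psd_fix_iff {n : Type*} [Fintype n] [DecidableEq n] {P Q : Matrix n n ℝ}
    (hP : P.PosSemidef) (hQ : Qᵀ * Q = 1) :
    (Qᵀ * P).PosSemidef ↔ Q * P = P := by
  constructor
  · exact orth_mul_psd_eq hP hQ
  · intro h
    have h2 : Qᵀ * P = P := by
      rw [← h, ← Matrix.mul_assoc, hQ, Matrix.one_mul, h]
    rw [h2]
    exact hP

lemma psd_transpose_eq {n : Type*} [Fintype n] [DecidableEq n] {P : Matrix n n ℝ}
    (hP : P.PosSemidef) : Pᵀ = P := by
  rw [← real_conjTranspose_eq_transpose']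
  exact hP.1

/-- Range inclusion for the diagonal blocks. -/
lemma range_blk_le {L M : Mat d T} (t : Fin T) (hA : (blk (Mᵀ * L) t).PosSemidef) :
    LinearMap.range (blk (Mᵀ * L) t).mulVecLin ≤
      LinearMap.range (blk (Lᵀ * L) t).mulVecLin := by
  have fact1 : blk (Mᵀ * L) t = (colBlk M t)ᵀ * colBlk L t := blk_transpose_mul M L t
  have fact2 : blk (Lᵀ * L) t = (colBlk L t)ᵀ * colBlk L t := blk_transpose_mul L L t
  have hAsym : blk (Mᵀ * L) t = (colBlk L t)ᵀ * colBlk M t := by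
    have h1 := psd_transpose_eq hA
    rw [← h1, fact1]
    rw [Matrix.transpose_mul, Matrix.transpose_transpose]
  rw [hAsym, fact2, range_transpose_mul_self, Matrix.mulVecLin_mul]
  exact LinearMap.range_comp_le_range _ _

lemma ker_blk_le {L M : Mat d T} (t : Fin T) :
    LinearMap.ker (blk (Lᵀ * L) t).mulVecLin ≤
      LinearMap.ker (blk (Mᵀ * L) t).mulVecLin := by
  have fact1 : blk (Mᵀ * L) t = (colBlk M t)ᵀ * colBlk L t := blk_transpose_mul M L t
  have fact2 : blk (Lᵀ * L) t = (colBlk L t)ᵀ * colBlk L t := blk_transpose_mul L L t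
  rw [fact2, Matrix.ker_mulVecLin_transpose_mul_self, fact1]
  intro v hv
  simp only [LinearMap.mem_ker, Matrix.mulVecLin_apply] at hv ⊢
  rw [← Matrix.mulVec_mulVec, hv, Matrix.mulVec_zero]

end rank

section refl
variable {n : Type*} [Fintype n] [DecidableEq n]

lemma dotProduct_self_pos {v : n → ℝ} (hv : v ≠ 0) : 0 < v ⬝ᵥ v := by
  have h1 : 0 ≤ v ⬝ᵥ v := Finset.sum_nonneg fun k _ => mul_self_nonneg _
  rcases h1.lt_or_eq with h | h
  · exact h
  · exfalso
    apply hv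
    ext k
    have := (Finset.sum_eq_zero_iff_of_nonneg
      (fun k (_ : k ∈ Finset.univ) => mul_self_nonneg (v k))).mp h.symm k (Finset.mem_univ k)
    simpa [mul_self_eq_zero] using this

lemma refl_transpose (v : n → ℝ) :
    ((1 : Matrix n n ℝ) - (2:ℝ) • vecMulVec v v)ᵀ = 1 - (2:ℝ) • vecMulVec v v := by
  rw [Matrix.transpose_sub, Matrix.transpose_smul, Matrix.transpose_one, vecMulVec_transpose]

lemma refl_orth {v : n → ℝ} (hv : v ⬝ᵥ v = 1) :
    ((1 : Matrix n n ℝ) - (2:ℝ) • vecMulVec v v)ᵀ * ((1 : Matrix n n ℝ) - (2:ℝ) • vecMulVec v v)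
      = 1 := by
  rw [refl_transpose]
  have expand : ((1 : Matrix n n ℝ) - (2:ℝ) • vecMulVec v v) * (1 - (2:ℝ) • vecMulVec v v)
      = 1 - (4:ℝ) • vecMulVec v v + (4:ℝ) • (vecMulVec v v * vecMulVec v v) := by
    simp only [Matrix.sub_mul, Matrix.mul_sub, Matrix.smul_mul, Matrix.mul_smul,
      Matrix.one_mul, Matrix.mul_one, smul_smul]
    module
  rw [expand, vecMulVec_mul_self, hv]
  simp

lemma vecMulVec_mul_eq_zero {A : Matrix n n ℝ} {u : n → ℝ} (hAsym : Aᵀ = A)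
    (hu : A *ᵥ u = 0) : vecMulVec u u * A = 0 := by
  ext i j
  simp only [Matrix.mul_apply, Matrix.vecMulVec_apply, Matrix.zero_apply]
  have h1 : ∀ k, u i * u k * A k j = u i * (Aᵀ j k * u k) := by
    intro k; rw [Matrix.transpose_apply]; ring
  rw [Finset.sum_congr rfl (fun k _ => h1 k), ← Finset.mul_sum]
  have h2 : ∑ k, Aᵀ j k * u k = (Aᵀ *ᵥ u) j := rfl
  rw [h2, hAsym, hu]
  simp

lemma mulVec_eq_zero_of_vecMulVec {B : Matrix n n ℝ} {u : n → ℝ} (hBsym : Bᵀ = B)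
    (hu1 : u ⬝ᵥ u = 1) (h : vecMulVec u u * B = 0) : B *ᵥ u = 0 := by
  have hi : ∃ i, u i ≠ 0 := by
    by_contra h'
    push_neg at h'
    have : u = 0 := funext h'
    rw [this] at hu1
    simp [dotProduct] at hu1
  obtain ⟨i, hi⟩ := hi
  ext j
  have he := congrFun (congrFun h i) j
  simp only [Matrix.mul_apply, Matrix.vecMulVec_apply, Matrix.zero_apply] at he
  have h1 : ∀ k, u i * u k * B k j = u i * (Bᵀ j k * u k) := by
    intro k; rw [Matrix.transpose_apply]; ring
  rw [Finset.sum_congr rfl (fun k _ => h1 k), ← Finset.mul_sum] at he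
  have h2 : ∑ k, Bᵀ j k * u k = (Bᵀ *ᵥ u) j := rfl
  rw [h2, hBsym] at he
  have := mul_eq_zero.mp he
  rcases this with h3 | h3
  · exact absurd h3 hi
  · simpa using h3

end refl

open Module in
/-- `(MᵀL)_{t,t}` is positive semidefinite with
`rk((LᵀL)_{t,t}) = rk((MᵀL)_{t,t})` for all `t` iff `𝐎*(L,M) = 𝐎*(L,L)`. -/
theorem stmt7 (d T : ℕ) (hd : 0 < d) (hT : 0 < T) (L M : Mat d T)
    (hL : memL L) (hM : memL M) :
    (∀ t : Fin T, (blk (Mᵀ * L) t).PosSemidef ∧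
        (blk (Lᵀ * L) t).rank = (blk (Mᵀ * L) t).rank) ↔
    OStar L M = OStar L L := by
  constructor
  · intro h
    ext O
    rw [mem_OStar_iff_blocks, mem_OStar_iff_blocks]
    apply and_congr_right
    intro hO
    obtain ⟨hod, hblk⟩ := (memO_iff O).mp hO
    apply forall_congr'
    intro t
    have hA := (h t).1
    have hrk := (h t).2
    have hB := blk_psd L t
    have hrange : LinearMap.range (blk (Mᵀ * L) t).mulVecLin
        = LinearMap.range (blk (Lᵀ * L) t).mulVecLin := by
      apply Submodule.eq_of_le_of_finrank_le (range_blk_le t hA)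
      exact hrk.le
    rw [psd_fix_iff hA (hblk t), psd_fix_iff hB (hblk t)]
    constructor
    · intro hfix
      exact fix_of_range_le hrange.ge hfix
    · intro hfix
      exact fix_of_range_le hrange.le hfix
  · intro hset
    have h1 : (1 : Mat d T) ∈ OStar L L := by
      rw [mem_OStar_iff_blocks]
      refine ⟨memO_one, fun t => ?_⟩
      rw [blk_one, Matrix.transpose_one, Matrix.one_mul]
      exact blk_psd L t
    have h1M : (1 : Mat d T) ∈ OStar L M := by rw [hset]; exact h1
    rw [mem_OStar_iff_blocks] at h1M
    have hApsd : ∀ t, (blk (Mᵀ * L) t).PosSemidef := by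
      intro t
      have := h1M.2 t
      rwa [blk_one, Matrix.transpose_one, Matrix.one_mul] at this
    intro t
    refine ⟨hApsd t, ?_⟩
    by_contra hne
    have hle : (blk (Mᵀ * L) t).rank ≤ (blk (Lᵀ * L) t).rank :=
      Submodule.finrank_mono (range_blk_le t (hApsd t))
    have hlt : (blk (Mᵀ * L) t).rank < (blk (Lᵀ * L) t).rank :=
      lt_of_le_of_ne hle (fun hh => hne hh.symm)
    have hker : ¬ (LinearMap.ker (blk (Mᵀ * L) t).mulVecLin ≤
        LinearMap.ker (blk (Lᵀ * L) t).mulVecLin) := by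
      intro hcon
      have e1 := LinearMap.finrank_range_add_finrank_ker (blk (Mᵀ * L) t).mulVecLin
      have e2 := LinearMap.finrank_range_add_finrank_ker (blk (Lᵀ * L) t).mulVecLin
      have e12 : (blk (Mᵀ * L) t).rank
            + finrank ℝ (LinearMap.ker (blk (Mᵀ * L) t).mulVecLin)
          = (blk (Lᵀ * L) t).rank
            + finrank ℝ (LinearMap.ker (blk (Lᵀ * L) t).mulVecLin) := e1.trans e2.symm
      have e3 := Submodule.finrank_mono hcon
      omega
    obtain ⟨v, hvA, hvB⟩ := SetLike.not_le_iff_exists.mp hker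
    have hv0 : v ≠ 0 := by rintro rfl; exact hvB (Submodule.zero_mem _)
    have hc0 : 0 < v ⬝ᵥ v := dotProduct_self_pos hv0
    have hrs : 0 < Real.sqrt (v ⬝ᵥ v) := Real.sqrt_pos.mpr hc0
    set u : Fin d → ℝ := (Real.sqrt (v ⬝ᵥ v))⁻¹ • v with hu
    have huu : u ⬝ᵥ u = 1 := by
      rw [hu, smul_dotProduct, dotProduct_smul, smul_eq_mul, smul_eq_mul,
        ← mul_assoc, ← pow_two, inv_pow, Real.sq_sqrt hc0.le, inv_mul_cancel₀ hc0.ne']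
    have huA : u ∈ LinearMap.ker (blk (Mᵀ * L) t).mulVecLin :=
      Submodule.smul_mem _ _ hvA
    have huB : u ∉ LinearMap.ker (blk (Lᵀ * L) t).mulVecLin := by
      intro hcon
      apply hvB
      have hveq : v = Real.sqrt (v ⬝ᵥ v) • u := by
        rw [hu, smul_smul, mul_inv_cancel₀ hrs.ne', one_smul]
      rw [hveq]
      exact Submodule.smul_mem _ _ hcon
    set Q : Matrix (Fin d) (Fin d) ℝ := 1 - (2:ℝ) • vecMulVec u u with hQ
    have hQorth : Qᵀ * Q = 1 := refl_orth huu
    have hAu : (blk (Mᵀ * L) t) *ᵥ u = 0 := huA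
    have hAsym : (blk (Mᵀ * L) t)ᵀ = blk (Mᵀ * L) t := psd_transpose_eq (hApsd t)
    have hBsym : (blk (Lᵀ * L) t)ᵀ = blk (Lᵀ * L) t := psd_transpose_eq (blk_psd L t)
    have hQA : Q * blk (Mᵀ * L) t = blk (Mᵀ * L) t := by
      rw [hQ, Matrix.sub_mul, Matrix.one_mul, Matrix.smul_mul,
        vecMulVec_mul_eq_zero hAsym hAu]
      simp
    set O' : Mat d T := setBlk (1 : Mat d T) t Q with hO'
    have hO'memO : memO O' := memO_setBlk memO_one hQorth
    have hO'M : O' ∈ OStar L M := by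
      rw [mem_OStar_iff_blocks]
      refine ⟨hO'memO, fun s => ?_⟩
      rcases eq_or_ne s t with rfl | hst
      · rw [hO', blk_setBlk_same]
        rw [(psd_fix_iff (hApsd s) hQorth)]
        exact hQA
      · rw [hO', blk_setBlk_ne _ hst, blk_one, Matrix.transpose_one, Matrix.one_mul]
        exact hApsd s
    have hO'L : O' ∈ OStar L L := by rw [← hset]; exact hO'M
    rw [mem_OStar_iff_blocks] at hO'L
    have hQB : Q * blk (Lᵀ * L) t = blk (Lᵀ * L) t := by
      have := hO'L.2 t
      rw [hO', blk_setBlk_same] at this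
      exact (psd_fix_iff (blk_psd L t) hQorth).mp this
    have hvvB : vecMulVec u u * blk (Lᵀ * L) t = 0 := by
      have h2 := hQB
      rw [hQ, Matrix.sub_mul, Matrix.one_mul, Matrix.smul_mul] at h2
      have h3 : (2:ℝ) • (vecMulVec u u * blk (Lᵀ * L) t) = 0 := sub_eq_self.mp h2
      have h4 := smul_eq_zero.mp h3
      rcases h4 with h4 | h4
      · norm_num at h4
      · exact h4
    have hBu := mulVec_eq_zero_of_vecMulVec hBsym huu hvvB
    exact huB hBu
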